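/- Let ρ > 0, α > 0, and x = αe ∈ ℝⁿ where e is the all-ones vector. Then prox_{(1/ρ)h₁}(x) = {0} if α < √(2/(ρ√n)); prox_{(1/ρ)h₁}(x) = {0, x} if α = √(2/(ρ√n)); and prox_{(1/ρ)h₁}(x) = {x} if α > √(2/(ρ√n)). -/

import Mathlib

/-- The ℓ₁ norm on `ℝⁿ`. -/
noncomputable def l1norm {n : ℕ} (x : Fin n → ℝ) : ℝ := ∑ i, |x i|

/-- The ℓ₂ norm on `ℝⁿ`. -/
noncomputable def l2norm {n : ℕ} (x : Fin n → ℝ) : ℝ := Real.sqrt (∑ i, (x i) ^ 2)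

-- `h₁(x) = ‖x‖₁/‖x‖₂` for `x ≠ 0`, and `h₁(0) = 0`.
open Classical in
noncomputable def h1 {n : ℕ} (x : Fin n → ℝ) : ℝ :=
  if x = 0 then 0 else l1norm x / l2norm x

/-- `prox_{(1/ρ) f}(z)`: the set of global minimizers of `(ρ/2)‖u - z‖₂² + f(u)`. -/
noncomputable def proxSet {n : ℕ} (ρ : ℝ) (f : (Fin n → ℝ) → ℝ) (z : Fin n → ℝ) :
    Set (Fin n → ℝ) :=
  {u | ∀ v : Fin n → ℝ,
    ρ / 2 * (∑ i, (u i - z i) ^ 2) + f u ≤ ρ / 2 * (∑ i, (v i - z i) ^ 2) + f v}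

set_option maxHeartbeats 1000000 in
lemma key {n : ℕ} (ρ α : ℝ) (hρ : 0 < ρ) (hα : 0 < α) {u : Fin n → ℝ} (hu : u ≠ 0)
    (huz : u ≠ fun _ => α) :
    min (ρ/2 * (n*α^2)) (Real.sqrt n) < ρ/2 * (∑ i, (u i - α)^2) + h1 u := by
  set Q : ℝ := ∑ i, (u i)^2 with hQdef
  set P : ℝ := ∑ i, u i with hPdef
  set s : ℝ := l1norm u with hsdef
  set q : ℝ := l2norm u with hqdef
  have hQpos : 0 < Q := by
    obtain ⟨i, hi⟩ := Function.ne_iff.mp hu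
    exact Finset.sum_pos' (fun j _ => sq_nonneg _)
      ⟨i, Finset.mem_univ i, lt_of_le_of_ne (sq_nonneg _) (Ne.symm (pow_ne_zero 2 hi))⟩
  have hq : 0 < q := Real.sqrt_pos.mpr hQpos
  have hq2 : q^2 = Q := Real.sq_sqrt hQpos.le
  have hs0 : 0 ≤ s := Finset.sum_nonneg fun i _ => abs_nonneg _
  have hQs : Q ≤ s^2 := by
    have := Finset.sum_sq_le_sq_sum_of_nonneg (s := Finset.univ)
      (f := fun i => |u i|) (fun i _ => abs_nonneg _)
    simpa [hsdef, l1norm, sq_abs] using this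
  have hsq : q ≤ s := by
    have := Real.sqrt_le_sqrt hQs
    rwa [Real.sqrt_sq hs0] at this
  have hP : P ≤ s := Finset.sum_le_sum fun i _ => le_abs_self _
  have hT : ∑ i, (u i - α)^2 = Q - 2*α*P + n*α^2 := by
    have h1 : ∀ i : Fin n, (u i - α)^2 = (u i)^2 - 2*α*(u i) + α^2 := fun i => by ring
    rw [Finset.sum_congr rfl fun i _ => h1 i]
    rw [Finset.sum_add_distrib, Finset.sum_sub_distrib, ← Finset.mul_sum,
      Finset.sum_const, Finset.card_univ, Fintype.card_fin, nsmul_eq_mul]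
  have hh1 : h1 u = s / q := by rw [h1, if_neg hu]
  set r : ℝ := Real.sqrt n with hrdef
  have hr0 : 0 ≤ r := Real.sqrt_nonneg _
  have hr2 : r^2 = (n:ℝ) := Real.sq_sqrt (Nat.cast_nonneg n)
  have hcs : s ≤ r * q := by
    have h2 : s^2 ≤ (n:ℝ) * Q := by
      have := sq_sum_le_card_mul_sum_sq (s := Finset.univ) (f := fun i => |u i|)
      simpa [hsdef, l1norm, sq_abs] using this
    calc s = Real.sqrt (s^2) := (Real.sqrt_sq hs0).symm
      _ ≤ Real.sqrt ((n:ℝ) * Q) := Real.sqrt_le_sqrt h2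
      _ = r * q := by rw [Real.sqrt_mul (Nat.cast_nonneg n)]; rfl
  clear_value Q P s q r
  rw [hT, hh1]
  rcases le_or_gt (ρ*α*q) 1 with hA | hB
  · -- case A : strictly above ρ/2 n α²
    refine lt_of_le_of_lt (min_le_left _ _) ?_
    have h2 : 1 - ρ*α*q + ρ*α*s ≤ s/q := by
      rw [le_div_iff₀ hq]
      nlinarith [mul_nonneg (sub_nonneg.2 hsq) (sub_nonneg.2 hA)]
    nlinarith [mul_pos hρ (mul_pos hq hq), mul_nonneg (mul_pos hρ hα).le (sub_nonneg.2 hP)]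
  · -- case B
    have hinv : 1/q < ρ*α := by rw [div_lt_iff₀ hq]; linarith
    have hid : ρ/2 * (Q - 2*α*P + n*α^2) + s/q
        = r + ρ/2*(q - α*r)^2 + ρ*α*(s-P) + (r*q - s)*(ρ*α - 1/q) := by
      field_simp
      rw [← hq2, ← hr2]
      ring
    refine lt_of_le_of_lt (min_le_right _ _) ?_
    by_contra hcon
    push_neg at hcon
    rw [hid] at hcon
    have t1 : 0 ≤ ρ/2*(q - α*r)^2 := by positivity
    have t2 : 0 ≤ ρ*α*(s-P) := mul_nonneg (mul_pos hρ hα).le (by linarith)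
    have t3 : 0 ≤ (r*q - s)*(ρ*α - 1/q) := mul_nonneg (by linarith) (by linarith)
    have hA0 : (q - α*r)^2 = 0 := by
      by_contra hne
      have hpos : 0 < (q - α*r)^2 := (sq_nonneg _).lt_of_ne (Ne.symm hne)
      nlinarith [hcon, t2, t3, mul_pos hρ hpos]
    have e1 : q = α*r := by
      have := pow_eq_zero_iff (n := 2) two_ne_zero |>.mp hA0
      linarith [sub_eq_zero.mp this]
    have e2 : s = P := by
      have h4 : ρ*α*(s-P) ≤ ρ*α*0 := by rw [mul_zero]; linarith
      have := (mul_le_mul_iff_of_pos_left (mul_pos hρ hα)).mp h4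
      linarith
    have e3 : r*q = s := by
      have h5 : r*q - s ≤ 0 := by
        by_contra hcc
        push_neg at hcc
        have := mul_pos hcc (by linarith : 0 < ρ*α - 1/q)
        linarith
      linarith
    have hP' : P = α * r^2 := by rw [← e2, ← e3, e1]; ring
    have hQ' : Q = α^2 * r^2 := by rw [← hq2, e1]; ring
    have hT0 : ∑ i, (u i - α)^2 = 0 := by
      rw [hT, hP', hQ', ← hr2]; ring
    have : u = fun _ => α := by
      funext i
      have hz := (Finset.sum_eq_zero_iff_of_nonneg
        (fun j (_ : j ∈ Finset.univ) => sq_nonneg (u j - α))).mp hT0 i (Finset.mem_univ i)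
      have := pow_eq_zero_iff (n := 2) (by norm_num) |>.mp hz
      linarith [sub_eq_zero.mp this]
    exact huz this

lemma val_zero {n : ℕ} (ρ α : ℝ) :
    ρ/2 * (∑ i : Fin n, ((0 : Fin n → ℝ) i - α)^2) + h1 (0 : Fin n → ℝ)
      = ρ/2 * (n*α^2) := by
  have : ∀ i : Fin n, ((0 : Fin n → ℝ) i - α)^2 = α^2 := fun i => by
    simp [Pi.zero_apply]
  rw [Finset.sum_congr rfl fun i _ => this i, Finset.sum_const, Finset.card_univ,
    Fintype.card_fin, nsmul_eq_mul, h1, if_pos rfl, add_zero]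

lemma val_z {n : ℕ} (ρ α : ℝ) (hn : 0 < n) (hα : 0 < α) :
    ρ/2 * (∑ i : Fin n, ((fun _ : Fin n => α) i - α)^2) + h1 (fun _ : Fin n => α)
      = Real.sqrt n := by
  have hz : (fun _ : Fin n => α) ≠ 0 := by
    intro h
    exact hα.ne' (congrFun h ⟨0, hn⟩)
  have hnR : (0:ℝ) < n := by exact_mod_cast hn
  have hr : 0 < Real.sqrt n := Real.sqrt_pos.mpr hnR
  have hr2 : Real.sqrt n ^ 2 = (n:ℝ) := Real.sq_sqrt hnR.le
  have h1v : l1norm (fun _ : Fin n => α) = n * α := by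
    simp [l1norm, abs_of_pos hα, Finset.sum_const, Finset.card_univ, mul_comm]
  have h2v : l2norm (fun _ : Fin n => α) = Real.sqrt n * α := by
    rw [l2norm]
    simp only [Finset.sum_const, Finset.card_univ, Fintype.card_fin, nsmul_eq_mul]
    rw [Real.sqrt_mul (Nat.cast_nonneg n), Real.sqrt_sq hα.le]
  rw [h1, if_neg hz, h1v, h2v]
  have : ∀ i : Fin n, ((fun _ : Fin n => α) i - α)^2 = 0 := fun i => by simp
  rw [Finset.sum_congr rfl fun i _ => this i, Finset.sum_const]
  simp only [smul_zero, mul_zero, zero_add]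
  rw [div_eq_iff (by positivity : Real.sqrt n * α ≠ 0)]
  linear_combination (-α) * hr2

theorem stmt_13 {n : ℕ} (ρ α : ℝ) (hρ : 0 < ρ) (hα : 0 < α) :
    (α < Real.sqrt (2 / (ρ * Real.sqrt n)) →
      proxSet ρ h1 (fun _ : Fin n => α) = {0}) ∧
    (α = Real.sqrt (2 / (ρ * Real.sqrt n)) →
      proxSet ρ h1 (fun _ : Fin n => α) = {0, fun _ => α}) ∧
    (Real.sqrt (2 / (ρ * Real.sqrt n)) < α →
      proxSet ρ h1 (fun _ : Fin n => α) = {fun _ => α}) := by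
  rcases Nat.eq_zero_or_pos n with hn | hn
  · subst hn
    have ht : Real.sqrt (2 / (ρ * Real.sqrt ((0:ℕ):ℝ))) = 0 := by norm_num
    refine ⟨fun h => absurd (ht ▸ h) (by linarith), fun h => absurd (ht ▸ h) hα.ne', fun _ => ?_⟩
    ext u
    simp only [proxSet, Set.mem_setOf_eq, Set.mem_singleton_iff]
    constructor
    · intro _; exact funext fun i => i.elim0
    · intro _ v
      have huv : u = v := funext fun i => i.elim0
      rw [huv]
  · have hnR : (0:ℝ) < n := by exact_mod_cast hn
    have hr : 0 < Real.sqrt (n:ℝ) := Real.sqrt_pos.mpr hnR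
    have hr2 : Real.sqrt (n:ℝ) ^ 2 = (n:ℝ) := Real.sq_sqrt hnR.le
    have hρr : 0 < ρ * Real.sqrt (n:ℝ) := mul_pos hρ hr
    have hmem : ∀ u : Fin n → ℝ, u ∈ proxSet ρ h1 (fun _ : Fin n => α) ↔
        ∀ v : Fin n → ℝ, ρ/2 * (∑ i, (u i - α)^2) + h1 u
          ≤ ρ/2 * (∑ i, (v i - α)^2) + h1 v := fun u => Iff.rfl
    have hchar : ∀ u : Fin n → ℝ, u ∈ proxSet ρ h1 (fun _ : Fin n => α) ↔
        ρ/2 * (∑ i, (u i - α)^2) + h1 u ≤ min (ρ/2 * (n*α^2)) (Real.sqrt n) := by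
      intro u
      rw [hmem u]
      constructor
      · intro h
        have h0 := h 0
        rw [val_zero ρ α] at h0
        have hz := h (fun _ => α)
        rw [val_z ρ α hn hα] at hz
        exact le_min h0 hz
      · intro hle v
        by_cases hv0 : v = 0
        · rw [hv0, val_zero ρ α]
          exact hle.trans (min_le_left _ _)
        · by_cases hvz : v = fun _ => α
          · rw [hvz, val_z ρ α hn hα]
            exact hle.trans (min_le_right _ _)
          · exact hle.trans (key ρ α hρ hα hv0 hvz).le
    refine ⟨?_, ?_, ?_⟩
    · intro hlt
      have h2 : α^2 < 2 / (ρ * Real.sqrt n) := (Real.lt_sqrt hα.le).mp hlt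
      have h3 : α^2 * (ρ * Real.sqrt n) < 2 := (lt_div_iff₀ hρr).mp h2
      have hcmp : ρ/2 * ((n:ℝ)*α^2) < Real.sqrt n := by
        nlinarith [hr2, h3, hr]
      ext u
      rw [hchar u, Set.mem_singleton_iff]
      constructor
      · intro h
        by_contra h0
        by_cases huz : u = fun _ => α
        · rw [huz, val_z ρ α hn hα] at h
          have := min_le_left (ρ/2 * ((n:ℝ)*α^2)) (Real.sqrt n)
          linarith [h.trans this]
        · linarith [key ρ α hρ hα h0 huz]
      · intro h
        rw [h, val_zero ρ α]
        exact le_min le_rfl hcmp.le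
    · intro heq
      have h2 : α^2 = 2 / (ρ * Real.sqrt n) := by
        rw [heq, Real.sq_sqrt (by positivity)]
      have h3 : α^2 * (ρ * Real.sqrt n) = 2 := by
        rw [h2]; field_simp
      have hcmp : ρ/2 * ((n:ℝ)*α^2) = Real.sqrt n := by
        linear_combination (Real.sqrt (n:ℝ) / 2) * h3 - (ρ*α^2/2) * hr2
      ext u
      rw [hchar u, Set.mem_insert_iff, Set.mem_singleton_iff]
      constructor
      · intro h
        by_contra h0
        push_neg at h0
        linarith [key ρ α hρ hα h0.1 h0.2]
      · rintro (h | h)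
        · rw [h, val_zero ρ α]
          exact le_min le_rfl hcmp.le
        · rw [h, val_z ρ α hn hα]
          exact le_min (le_of_eq hcmp.symm) le_rfl
    · intro hlt
      have h2 : 2 / (ρ * Real.sqrt n) < α^2 := (Real.sqrt_lt' hα).mp hlt
      have h3 : 2 < α^2 * (ρ * Real.sqrt n) := (div_lt_iff₀ hρr).mp h2
      have hcmp : Real.sqrt n < ρ/2 * ((n:ℝ)*α^2) := by
        nlinarith [hr2, h3, hr]
      ext u
      rw [hchar u, Set.mem_singleton_iff]
      constructor
      · intro h
        by_contra huz
        by_cases h0 : u = 0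
        · rw [h0, val_zero ρ α] at h
          have := min_le_right (ρ/2 * ((n:ℝ)*α^2)) (Real.sqrt n)
          linarith [h.trans this]
        · linarith [key ρ α hρ hα h0 huz]
      · intro h
        rw [h, val_z ρ α hn hα]
        exact le_min hcmp.le le_rfl
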